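/- Let K^+, K^- : D → ℝ, let J ∈ D, and let F be a finite subset of D(J). Define T_F f := Σ_{I∈F} [ K_I^+ · (∫_{I^-} f) · χ_{I^+} + K_I^- · (∫_{I^+} f) · χ_{I^-} ]. Then ⟨T_F h_J, h_J⟩ = (1/(4|J|)) Σ_{I∈F, I≠J} (K_I^+ + K_I^-) · |I|² − 1_{J∈F} · (1/4) (K_J^+ + K_J^-) · |J|, where ⟨·,·⟩ denotes the inner product in L²(ℝ, dx) and 1_{J∈F} equals 1 if J ∈ F and 0 otherwise. -/

import Mathlib

open MeasureTheory Set

/-- The dyadic interval `[2^j k, 2^j (k+1))` indexed by `(j, k)`. -/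
abbrev DI := ℤ × ℤ

noncomputable def DIset (I : DI) : Set ℝ :=
  Set.Ico ((2:ℝ)^I.1 * I.2) ((2:ℝ)^I.1 * (I.2 + 1))

noncomputable def DIlen (I : DI) : ℝ := (2:ℝ)^I.1

/-- The left half `I⁺` of a dyadic interval. -/
def DIleft (I : DI) : DI := (I.1 - 1, 2 * I.2)

/-- The right half `I⁻` of a dyadic interval. -/
def DIright (I : DI) : DI := (I.1 - 1, 2 * I.2 + 1)

/-- `I ∈ D(J)`: `I` is a dyadic subinterval of `J`. -/
def DIsub (I J : DI) : Prop := DIset I ⊆ DIset J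

/-- `m_I f`, the average of `f` over `I`. -/
noncomputable def avg (f : ℝ → ℝ) (I : DI) : ℝ := (DIlen I)⁻¹ * ∫ x in DIset I, f x

/-- The `L²`-normalized Haar function of `I`. -/
noncomputable def haar (I : DI) : ℝ → ℝ := fun x =>
  (Real.sqrt (DIlen I))⁻¹ *
    ((DIset (DIleft I)).indicator (fun _ => (1:ℝ)) x
      - (DIset (DIright I)).indicator (fun _ => (1:ℝ)) x)

/-- `⟨f, h_I⟩`. -/
noncomputable def haarCoef (f : ℝ → ℝ) (I : DI) : ℝ := ∫ x, f x * haar I x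

/-- A weight: measurable, a.e. positive, locally integrable. -/
def IsWeight (w : ℝ → ℝ) : Prop :=
  Measurable w ∧ (∀ᵐ x ∂(volume : Measure ℝ), 0 < w x) ∧ LocallyIntegrable w volume

/-- The measure `w dx`. -/
noncomputable def wMeasure (w : ℝ → ℝ) : Measure ℝ :=
  volume.withDensity (fun x => ENNReal.ofReal (w x))

/-- `Δ_I f = m_{I⁺} f − m_{I⁻} f`. -/
noncomputable def deltaAvg (f : ℝ → ℝ) (I : DI) : ℝ := avg f (DIleft I) - avg f (DIright I)


/-- The `I`-th summand of a perfect dyadic operator: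
`K_I⁺ (∫_{I⁻} f) χ_{I⁺} + K_I⁻ (∫_{I⁺} f) χ_{I⁻}`. -/
noncomputable def pdTerm (Kp Km : DI → ℝ) (f : ℝ → ℝ) (I : DI) (x : ℝ) : ℝ :=
  Kp I * (∫ y in DIset (DIright I), f y) * (DIset (DIleft I)).indicator (fun _ => (1:ℝ)) x
  + Km I * (∫ y in DIset (DIleft I), f y) * (DIset (DIright I)).indicator (fun _ => (1:ℝ)) x

lemma DIlen_pos (I : DI) : 0 < DIlen I := zpow_pos (by norm_num) _

lemma DIset_nonempty (I : DI) : (DIset I).Nonempty := by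
  rw [DIset, Set.nonempty_Ico]
  have := DIlen_pos I
  rw [DIlen] at this
  nlinarith

lemma DIunion (I : DI) : DIset (DIleft I) ∪ DIset (DIright I) = DIset I := by
  rw [DIset, DIset, DIset, DIleft, DIright]
  have h1 : (2:ℝ)^(I.1-1) * ((2*I.2:ℤ):ℝ) = (2:ℝ)^I.1 * I.2 := by
    rw [zpow_sub₀ (by norm_num)]; push_cast; ring
  have h2 : (2:ℝ)^(I.1-1) * (((2*I.2+1:ℤ):ℝ)+1) = (2:ℝ)^I.1 * (I.2+1) := by
    rw [zpow_sub₀ (by norm_num)]; push_cast; ring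
  have h3 : ((2*I.2:ℤ):ℝ)+1 = ((2*I.2+1:ℤ):ℝ) := by push_cast; ring
  simp only [h3]
  rw [Set.Ico_union_Ico_eq_Ico]
  · rw [h1, h2]
  · rw [← h3]; have := zpow_pos (a := (2:ℝ)) (by norm_num) (I.1-1); nlinarith
  · rw [h2]
    have := zpow_pos (a := (2:ℝ)) (by norm_num) (I.1-1)
    have h4 : ((2*I.2+1:ℤ):ℝ) ≤ ((2*I.2+1:ℤ):ℝ)+1 := by linarith
    nlinarith [mul_le_mul_of_nonneg_left h4 (le_of_lt (zpow_pos (a := (2:ℝ)) (by norm_num) (I.1-1)))]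

lemma DIdisj (I : DI) : Disjoint (DIset (DIleft I)) (DIset (DIright I)) := by
  rw [DIset, DIset, DIleft, DIright]
  rw [Set.Ico_disjoint_Ico]
  have h : ((2*I.2:ℤ):ℝ)+1 = ((2*I.2+1:ℤ):ℝ) := by push_cast; ring
  rw [h]
  exact (min_le_left _ _).trans (le_max_right _ _)

lemma DIset_lt (I : DI) : (2:ℝ)^I.1 * I.2 < (2:ℝ)^I.1 * (I.2+1) := by
  have hpi : (0:ℝ) < (2:ℝ)^I.1 := zpow_pos (by norm_num) _
  nlinarith

lemma nested_or_disjoint (I J : DI) (hij : I.1 ≤ J.1) :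
    DIsub I J ∨ Disjoint (DIset I) (DIset J) := by
  obtain ⟨i, m⟩ := I; obtain ⟨j, k⟩ := J
  simp only [DIsub, DIset] at *
  set d : ℤ := (2:ℤ)^(j-i).toNat with hd
  have hdpos : (0:ℤ) < d := pow_pos (by norm_num) _
  have hpi : (0:ℝ) < (2:ℝ)^i := zpow_pos (by norm_num) _
  have hsplit : (2:ℝ)^j = (2:ℝ)^i * (d:ℝ) := by
    rw [hd]
    push_cast
    rw [← zpow_natCast (2:ℝ) (j-i).toNat, Int.toNat_of_nonneg (by omega),
      ← zpow_add₀ (by norm_num : (2:ℝ) ≠ 0)]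
    ring_nf
  have key : ∀ a b : ℤ, ((2:ℝ)^i * a ≤ (2:ℝ)^i * b ↔ a ≤ b) := by
    intro a b
    rw [mul_le_mul_iff_right₀ hpi, Int.cast_le]
  rcases le_or_gt (d*k) m with h1 | h1
  · rcases lt_or_ge m (d*(k+1)) with h2 | h2
    · left
      apply Set.Ico_subset_Ico
      · rw [hsplit, mul_assoc, ← Int.cast_mul, key]; exact h1
      · rw [hsplit, mul_assoc]
        have e1 : ((k:ℝ)+1) = ((k+1:ℤ):ℝ) := by push_cast; ring
        have e2 : ((m:ℝ)+1) = ((m+1:ℤ):ℝ) := by push_cast; ring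
        rw [e1, ← Int.cast_mul, e2, key]; omega
    · right
      rw [Set.Ico_disjoint_Ico]
      refine le_trans (min_le_right _ _) (le_trans ?_ (le_max_left _ _))
      rw [hsplit, mul_assoc]
      have e1 : ((k:ℝ)+1) = ((k+1:ℤ):ℝ) := by push_cast; ring
      rw [e1, ← Int.cast_mul, key]; exact h2
  · right
    rw [Set.Ico_disjoint_Ico]
    refine le_trans (min_le_left _ _) (le_trans ?_ (le_max_right _ _))
    rw [hsplit, mul_assoc]
    have e2 : ((m:ℝ)+1) = ((m+1:ℤ):ℝ) := by push_cast; ring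
    rw [e2, ← Int.cast_mul, key]; omega

lemma sub_endpoints {I J : DI} (h : DIsub I J) :
    (2:ℝ)^J.1 * J.2 ≤ (2:ℝ)^I.1 * I.2 ∧ (2:ℝ)^I.1 * (I.2+1) ≤ (2:ℝ)^J.1 * (J.2+1) := by
  rw [DIsub, DIset, DIset, Set.Ico_subset_Ico_iff (DIset_lt I)] at h
  exact h

lemma sub_level {I J : DI} (h : DIsub I J) : I.1 ≤ J.1 := by
  obtain ⟨h1, h2⟩ := sub_endpoints h
  have hlen : (2:ℝ)^I.1 ≤ (2:ℝ)^J.1 := by nlinarith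
  exact (zpow_le_zpow_iff_right₀ (by norm_num : (1:ℝ) < 2)).1 hlen

lemma sub_self_eq {I J : DI} (h : DIsub I J) (hlev : I.1 = J.1) : I = J := by
  obtain ⟨h1, h2⟩ := sub_endpoints h
  rw [hlev] at h1 h2
  have hpj : (0:ℝ) < (2:ℝ)^J.1 := zpow_pos (by norm_num) _
  have e1 : (J.2:ℝ) ≤ I.2 := by
    have := (mul_le_mul_iff_right₀ hpj).1 h1; exact_mod_cast this
  have e2 : (I.2:ℝ) ≤ J.2 := by
    have := (mul_le_mul_iff_right₀ hpj).1 h2; have : (I.2:ℝ)+1 ≤ (J.2:ℝ)+1 := this; linarith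
  have : I.2 = J.2 := le_antisymm (by exact_mod_cast e2) (by exact_mod_cast e1)
  exact Prod.ext hlev this

lemma sub_cases {I J : DI} (h : DIsub I J) :
    I = J ∨ DIsub I (DIleft J) ∨ DIsub I (DIright J) := by
  rcases eq_or_lt_of_le (sub_level h) with hlev | hlev
  · exact Or.inl (sub_self_eq h hlev)
  · right
    have hl : I.1 ≤ (DIleft J).1 := by simp [DIleft]; omega
    have hr : I.1 ≤ (DIright J).1 := by simp [DIright]; omega
    rcases nested_or_disjoint I (DIleft J) hl with hs | hdl
    · exact Or.inl hs
    rcases nested_or_disjoint I (DIright J) hr with hs | hdr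
    · exact Or.inr hs
    exfalso
    obtain ⟨x, hx⟩ := DIset_nonempty I
    have : x ∈ DIset (DIleft J) ∪ DIset (DIright J) := (DIunion J) ▸ h hx
    rcases this with h' | h'
    · exact hdl.ne_of_mem hx h' rfl
    · exact hdr.ne_of_mem hx h' rfl

lemma DIset_meas (I : DI) : MeasurableSet (DIset I) := measurableSet_Ico

lemma DIvol (I : DI) : volume (DIset I) = ENNReal.ofReal (DIlen I) := by
  rw [DIset, Real.volume_Ico, DIlen]
  congr 1
  ring

lemma DIvol_lt (I : DI) : volume (DIset I) < ⊤ := by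
  rw [DIvol]; exact ENNReal.ofReal_lt_top

lemma ind_integrable (I : DI) :
    Integrable ((DIset I).indicator (fun _ => (1:ℝ))) volume := by
  rw [integrable_indicator_iff (DIset_meas I)]
  exact integrableOn_const (DIvol_lt I).ne

lemma haar_integrable (J : DI) : Integrable (haar J) volume := by
  have : haar J = fun x => (Real.sqrt (DIlen J))⁻¹ *
      ((DIset (DIleft J)).indicator (fun _ => (1:ℝ)) x
        - (DIset (DIright J)).indicator (fun _ => (1:ℝ)) x) := rfl
  rw [this]
  exact (((ind_integrable (DIleft J)).sub (ind_integrable (DIright J))).const_mul _)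

lemma ind_mul (S : Set ℝ) (f : ℝ → ℝ) (x : ℝ) :
    S.indicator (fun _ => (1:ℝ)) x * f x = S.indicator f x := by
  by_cases h : x ∈ S <;> simp [h]

lemma haar_setIntegral (J : DI) (A : Set ℝ) (hA : MeasurableSet A) :
    ∫ x in A, haar J x = (Real.sqrt (DIlen J))⁻¹ *
      ((volume (A ∩ DIset (DIleft J))).toReal - (volume (A ∩ DIset (DIright J))).toReal) := by
  unfold haar
  rw [integral_const_mul, integral_sub ((ind_integrable (DIleft J)).integrableOn)
      ((ind_integrable (DIright J)).integrableOn)]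
  rw [setIntegral_indicator (DIset_meas _), setIntegral_indicator (DIset_meas _),
    setIntegral_const, setIntegral_const, smul_eq_mul, smul_eq_mul, mul_one, mul_one]
  rfl

lemma haar_setIntegral_left (J A : DI) (h : DIsub A (DIleft J)) :
    ∫ x in DIset A, haar J x = (Real.sqrt (DIlen J))⁻¹ * DIlen A := by
  rw [haar_setIntegral J _ (DIset_meas A)]
  have h1 : DIset A ∩ DIset (DIleft J) = DIset A := Set.inter_eq_left.2 h
  have h2 : DIset A ∩ DIset (DIright J) = ∅ :=
    Set.disjoint_iff_inter_eq_empty.1 ((DIdisj J).mono_left h)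
  rw [h1, h2, DIvol]
  simp [ENNReal.toReal_ofReal (DIlen_pos A).le]

lemma haar_setIntegral_right (J A : DI) (h : DIsub A (DIright J)) :
    ∫ x in DIset A, haar J x = -((Real.sqrt (DIlen J))⁻¹ * DIlen A) := by
  rw [haar_setIntegral J _ (DIset_meas A)]
  have h1 : DIset A ∩ DIset (DIright J) = DIset A := Set.inter_eq_left.2 h
  have h2 : DIset A ∩ DIset (DIleft J) = ∅ :=
    Set.disjoint_iff_inter_eq_empty.1 (((DIdisj J).symm).mono_left h)
  rw [h1, h2, DIvol]
  simp only [measure_empty, ENNReal.toReal_zero, ENNReal.toReal_ofReal (DIlen_pos A).le]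
  ring

lemma DIsub_left (I : DI) : DIsub (DIleft I) I := by
  rw [DIsub, ← DIunion I]; exact Set.subset_union_left

lemma DIsub_right (I : DI) : DIsub (DIright I) I := by
  rw [DIsub, ← DIunion I]; exact Set.subset_union_right

lemma DIlen_half (I : DI) : DIlen (DIleft I) = DIlen I / 2 := by
  rw [DIlen, DIlen, DIleft, zpow_sub₀ (by norm_num : (2:ℝ) ≠ 0)]
  norm_num

lemma DIlen_half' (I : DI) : DIlen (DIright I) = DIlen I / 2 := by
  rw [DIlen, DIlen, DIright, zpow_sub₀ (by norm_num : (2:ℝ) ≠ 0)]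
  norm_num

lemma sqrt_sq (J : DI) : ((Real.sqrt (DIlen J))⁻¹)^2 = (DIlen J)⁻¹ := by
  rw [← Real.sqrt_inv, Real.sq_sqrt (inv_nonneg.2 (DIlen_pos J).le)]

lemma term_eq (Kp Km : DI → ℝ) (J I : DI) :
    (fun x => pdTerm Kp Km (haar J) I x * haar J x) =
    fun x => (Kp I * (∫ y in DIset (DIright I), haar J y)) * (DIset (DIleft I)).indicator (haar J) x
      + (Km I * (∫ y in DIset (DIleft I), haar J y)) * (DIset (DIright I)).indicator (haar J) x := by
  funext x
  rw [← ind_mul _ (haar J) x, ← ind_mul _ (haar J) x, pdTerm]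
  ring

lemma term_integrable (Kp Km : DI → ℝ) (J I : DI) :
    Integrable (fun x => pdTerm Kp Km (haar J) I x * haar J x) volume := by
  rw [term_eq]
  exact (((haar_integrable J).indicator (DIset_meas _)).const_mul _).add
    (((haar_integrable J).indicator (DIset_meas _)).const_mul _)

lemma term_integral (Kp Km : DI → ℝ) (J I : DI) :
    ∫ x, pdTerm Kp Km (haar J) I x * haar J x
      = (Kp I + Km I) * ((∫ x in DIset (DIleft I), haar J x) * (∫ x in DIset (DIright I), haar J x)) := by
  rw [term_eq]
  rw [integral_add (((haar_integrable J).indicator (DIset_meas _)).const_mul _)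
      (((haar_integrable J).indicator (DIset_meas _)).const_mul _),
    integral_const_mul, integral_const_mul, integral_indicator (DIset_meas _),
    integral_indicator (DIset_meas _)]
  ring

lemma term_integral_ne (Kp Km : DI → ℝ) (J I : DI) (h : DIsub I J) (hne : I ≠ J) :
    ∫ x, pdTerm Kp Km (haar J) I x * haar J x
      = (1 / (4 * DIlen J)) * ((Kp I + Km I) * (DIlen I)^2) := by
  rw [term_integral]
  have hprod : (∫ x in DIset (DIleft I), haar J x) * (∫ x in DIset (DIright I), haar J x)
      = (DIlen J)⁻¹ * ((DIlen I)^2 / 4) := by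
    rcases sub_cases h with hc | hc | hc
    · exact absurd hc hne
    · rw [haar_setIntegral_left J (DIleft I) ((DIsub_left I).trans hc),
        haar_setIntegral_left J (DIright I) ((DIsub_right I).trans hc),
        DIlen_half, DIlen_half', ← sqrt_sq J]
      ring
    · rw [haar_setIntegral_right J (DIleft I) ((DIsub_left I).trans hc),
        haar_setIntegral_right J (DIright I) ((DIsub_right I).trans hc),
        DIlen_half, DIlen_half', ← sqrt_sq J]
      ring
  rw [hprod, one_div, mul_inv]
  ring

lemma term_integral_self (Kp Km : DI → ℝ) (J : DI) :
    ∫ x, pdTerm Kp Km (haar J) J x * haar J x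
      = -((1/4) * (Kp J + Km J) * DIlen J) := by
  rw [term_integral,
    haar_setIntegral_left J (DIleft J) (le_refl _),
    haar_setIntegral_right J (DIright J) (le_refl _),
    DIlen_half, DIlen_half']
  have h1 : (Real.sqrt (DIlen J))⁻¹ * (DIlen J / 2) * -((Real.sqrt (DIlen J))⁻¹ * (DIlen J / 2))
      = -((DIlen J)⁻¹ * ((DIlen J)^2 / 4)) := by
    rw [← sqrt_sq J]; ring
  rw [h1]
  have hne := (DIlen_pos J).ne'
  field_simp


/-- computation of the testing pairing `⟨T_F h_J, h_J⟩`. -/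
theorem testing_pairing (Kp Km : DI → ℝ) (J : DI) (F : Finset DI)
    (hF : ∀ I ∈ F, DIsub I J) :
    ∫ x, (∑ I ∈ F, pdTerm Kp Km (haar J) I x) * haar J x
      = (1 / (4 * DIlen J)) * ∑ I ∈ F.erase J, (Kp I + Km I) * (DIlen I)^2
        - (if J ∈ F then (1:ℝ) else 0) * (1/4) * (Kp J + Km J) * DIlen J := by
  have hstep : ∫ x, (∑ I ∈ F, pdTerm Kp Km (haar J) I x) * haar J x
      = ∑ I ∈ F, ∫ x, pdTerm Kp Km (haar J) I x * haar J x := by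
    simp_rw [Finset.sum_mul]
    exact integral_finset_sum F (fun I _ => term_integrable Kp Km J I)
  rw [hstep, Finset.mul_sum]
  by_cases hJ : J ∈ F
  · rw [← Finset.add_sum_erase F _ hJ, term_integral_self,
      Finset.sum_congr rfl (fun I hI => term_integral_ne Kp Km J I
        (hF I (Finset.mem_of_mem_erase hI)) (Finset.ne_of_mem_erase hI))]
    rw [if_pos hJ]
    ring
  · rw [Finset.erase_eq_of_notMem hJ, if_neg hJ,
      Finset.sum_congr rfl (fun I hI => term_integral_ne Kp Km J I (hF I hI)
        (fun he => hJ (he ▸ hI)))]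
    ring
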